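/- Let δ be a limit ordinal with cf(δ) > ℵ₁ and let η̄ = ⟨η_α : α < δ⟩ be <*-increasing in ωω. Then every subset of Q_η̄ of cardinality ℵ₁ is included in the union of countably many directed subsets of Q_η̄. -/

import Mathlib

/-- `f <* g` for `f g : ℕ → ℕ` : `{n : f n ≥ g n}` is finite. -/
def LtStar (f g : ℕ → ℕ) : Prop := {n | g n ≤ f n}.Finite

/-- `f <* ν` for `f : ℕ → ℕ`, `ν : ℕ → ω+1` : `{n : f n ≥ ν n}` is finite. -/
def LtStarT (f : ℕ → ℕ) (ν : ℕ → ℕ∞) : Prop := {n | ν n ≤ (f n : ℕ∞)}.Finite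

/-- A condition of the forcing `Q_η̄`: a triple `(ρ, α, g)` with `ρ ∈ ω^{<ω}`,
`α < δ`, `g ∈ F_η̄`, and `η_α(n) ≤ g(n)` for all `n ≥ lg ρ`. -/
structure QCond (δ : Ordinal) (η : Ordinal → ℕ → ℕ) where
  ρ : List ℕ
  α : Ordinal
  g : ℕ → ℕ∞
  hα : α < δ
  hg : ∀ β, β < δ → LtStarT (η β) g
  hbound : ∀ n, ρ.length ≤ n → (η α n : ℕ∞) ≤ g n

/-- The order of `Q_η̄`. -/
def QLE {δ : Ordinal} {η : Ordinal → ℕ → ℕ} (p q : QCond δ η) : Prop :=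
  p.ρ <+: q.ρ ∧ p.α ≤ q.α ∧ (∀ n, q.g n ≤ p.g n) ∧
    (∀ n, q.ρ.length ≤ n → η p.α n ≤ η q.α n) ∧
    (∀ n, p.ρ.length ≤ n → n < q.ρ.length →
      η p.α n ≤ q.ρ.getD n 0 ∧ (q.ρ.getD n 0 : ℕ∞) ≤ p.g n)

/-- Auxiliary: a prefix relation from pointwise `getD` agreement. -/
lemma prefix_of_getD {a b : List ℕ} (h : a.length ≤ b.length)
    (he : ∀ i, i < a.length → a.getD i 0 = b.getD i 0) : a <+: b := by
  rw [List.prefix_iff_eq_take]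
  apply List.ext_getElem
  · simp [Nat.min_eq_left h]
  · intro n h1 h2
    have hb : n < b.length := lt_of_lt_of_le h1 h
    have := he n h1
    rw [List.getD_eq_getElem a 0 h1, List.getD_eq_getElem b 0 hb] at this
    set_option linter.unnecessarySimpa false in
    simpa [this] using (List.getElem_take (l := b)).symm

/-- Auxiliary: prefixes agree in `getD`. -/
lemma getD_of_prefix {a b : List ℕ} (h : a <+: b) {i : ℕ} (hi : i < a.length) :
    a.getD i 0 = b.getD i 0 := by
  have hb : i < b.length := lt_of_lt_of_le hi h.length_le
  rw [List.getD_eq_getElem a 0 hi, List.getD_eq_getElem b 0 hb]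
  exact h.getElem hi

/-- Auxiliary: `getD` of `List.ofFn`. -/
lemma getD_ofFn {α : Type*} {n : ℕ} (d : α) (g : Fin n → α) {i : ℕ} (hi : i < n) :
    (List.ofFn g).getD i d = g ⟨i, hi⟩ := by
  have hi' : i < (List.ofFn g).length := by rw [List.length_ofFn]; exact hi
  rw [List.getD_eq_getElem _ d hi', List.getElem_ofFn]

/-- If `cf(δ) > ℵ₁` then every set of `ℵ₁` many conditions of `Q_η̄` is included
in the union of countably many directed subsets of `Q_η̄`. -/
theorem QCond_sigma_directed_cover (δ : Ordinal) (hδ : Order.IsSuccLimit δ)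
    (hcof : Cardinal.aleph 1 < δ.cof) (η : Ordinal → ℕ → ℕ)
    (hinc : ∀ a b, a < b → b < δ → LtStar (η a) (η b)) :
    ∀ S : Set (QCond δ η), Cardinal.mk S = Cardinal.aleph 1 →
      ∃ D : ℕ → Set (QCond δ η),
        (∀ m, ∀ p ∈ D m, ∀ q ∈ D m, ∃ r ∈ D m, QLE p r ∧ QLE q r) ∧
        S ⊆ ⋃ m, D m := by
  intro S hS
  -- Step 1: find `β < δ` bounding all `p.α`, `p ∈ S`.
  obtain ⟨β, hβδ, hβ⟩ : ∃ β, β < δ ∧ ∀ p : QCond δ η, p ∈ S → p.α < β := by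
    have he : Nonempty (S ≃ (Cardinal.aleph 1).ord.ToType) := by
      rw [← Cardinal.lift_mk_eq']
      simp [hS, Cardinal.mk_ord_toType]
    obtain ⟨e⟩ := he
    set F : (Cardinal.aleph 1).ord.ToType → Ordinal :=
      fun i => Order.succ ((e.symm i : S) : QCond δ η).α with hF
    have hlt : iSup F < δ := by
      apply Ordinal.iSup_lt_ord
      · rw [Cardinal.mk_ord_toType]; exact hcof
      · intro i; exact hδ.succ_lt ((e.symm i : S) : QCond δ η).hα
    refine ⟨iSup F, hlt, fun p hp => ?_⟩
    have h1 : F (e ⟨p, hp⟩) ≤ iSup F := Ordinal.le_iSup F _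
    have h2 : F (e ⟨p, hp⟩) = Order.succ p.α := by rw [hF]; simp
    rw [h2] at h1
    exact lt_of_lt_of_le (Order.lt_succ _) h1
  -- countable index type
  set I := List ℕ × ℕ × List ℕ × List ℕ∞ with hI
  obtain ⟨f, hf⟩ := exists_surjective_nat I
  -- the candidate directed sets
  set E : I → Set (QCond δ η) := fun x =>
    { p | x.1 <+: p.ρ ∧ p.ρ.length ≤ x.2.1 ∧
        (∀ m, x.1.length ≤ m → m < p.ρ.length → p.ρ.getD m 0 = x.2.2.1.getD m 0) ∧
        p.α ≤ β ∧
        (∀ m, p.ρ.length ≤ m → m < x.2.1 → η p.α m = x.2.2.1.getD m 0) ∧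
        (∀ m, m < x.2.1 → p.g m = x.2.2.2.getD m ⊤) ∧
        (∀ m, x.2.1 ≤ m → η p.α m ≤ η β m ∧ (η β m : ℕ∞) ≤ p.g m) } with hE
  refine ⟨fun m => E (f m), ?_, ?_⟩
  · -- directedness
    rintro m p hp q hq
    rcases hfm : f m with ⟨ρ₀, n, u, v⟩
    simp only [hfm] at hp hq ⊢
    obtain ⟨hp1, hp2, hp3, hp4, hp5, hp6, hp7⟩ := hp
    obtain ⟨hq1, hq2, hq3, hq4, hq5, hq6, hq7⟩ := hq
    have hρ₀n : ρ₀.length ≤ n := le_trans hp1.length_le hp2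
    -- the common upper bound
    set rρ : List ℕ := List.ofFn (fun i : Fin n =>
      if (i : ℕ) < ρ₀.length then ρ₀.getD i 0 else u.getD i 0) with hrρ
    have hrlen : rρ.length = n := List.length_ofFn
    have hrget : ∀ i, i < n → rρ.getD i 0 =
        if i < ρ₀.length then ρ₀.getD i 0 else u.getD i 0 := by
      intro i hi
      rw [hrρ, getD_ofFn _ _ hi]
    set r : QCond δ η :=
      { ρ := rρ
        α := β
        g := fun k => min (p.g k) (q.g k)
        hα := hβδ
        hg := by
          intro γ hγ
          have h1 := p.hg γ hγ
          have h2 := q.hg γ hγ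
          refine Set.Finite.subset (Set.Finite.union h1 h2) ?_
          intro k hk
          simp only [Set.mem_setOf_eq] at hk
          rcases min_le_iff.mp hk with h | h
          · exact Or.inl h
          · exact Or.inr h
        hbound := by
          intro k hk
          rw [hrlen] at hk
          exact le_min (hp7 k hk).2 (hq7 k hk).2 } with hr
    -- membership of r
    have hrmem : r ∈ E (ρ₀, n, u, v) := by
      refine ⟨?_, ?_, ?_, le_refl β, ?_, ?_, ?_⟩
      · apply prefix_of_getD
        · rw [hrlen]; exact hρ₀n
        · intro i hi
          rw [hrget i (lt_of_lt_of_le hi hρ₀n), if_pos hi]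
      · rw [hrlen]
      · intro k hk1 hk2
        rw [hrlen] at hk2
        rw [hrget k hk2, if_neg (not_lt.mpr hk1)]
      · intro k hk1 hk2
        rw [hrlen] at hk1
        exact absurd hk2 (not_lt.mpr hk1)
      · intro k hk
        show min (p.g k) (q.g k) = _
        rw [hp6 k hk, hq6 k hk, min_self]
      · intro k hk
        exact ⟨le_refl _, le_min (hp7 k hk).2 (hq7 k hk).2⟩
    -- any member of the class is QLE-below r
    have key : ∀ s : QCond δ η, s ∈ E (ρ₀, n, u, v) →
        (∀ k, r.g k ≤ s.g k) → QLE s r := by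
      rintro s ⟨hs1, hs2, hs3, hs4, hs5, hs6, hs7⟩ hgs
      have hsval : ∀ k, s.ρ.length ≤ k → k < n → rρ.getD k 0 = η s.α k := by
        intro k hk1 hk2
        have hk3 : ρ₀.length ≤ k := le_trans hs1.length_le hk1
        rw [hrget k hk2, if_neg (not_lt.mpr hk3), hs5 k hk1 hk2]
      refine ⟨?_, hs4, hgs, ?_, ?_⟩
      · -- prefix
        apply prefix_of_getD
        · rw [hrlen]; exact hs2
        · intro i hi
          have hin : i < n := lt_of_lt_of_le hi hs2
          rw [hrget i hin]
          by_cases hc : i < ρ₀.length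
          · rw [if_pos hc, ← getD_of_prefix hs1 hc]
          · rw [if_neg hc, hs3 i (not_lt.mp hc) hi]
      · intro k hk
        rw [hrlen] at hk
        exact (hs7 k hk).1
      · intro k hk1 hk2
        show η s.α k ≤ rρ.getD k 0 ∧ (rρ.getD k 0 : ℕ∞) ≤ s.g k
        rw [hrlen] at hk2
        rw [hsval k hk1 hk2]
        exact ⟨le_refl _, s.hbound k hk1⟩
    exact ⟨r, hrmem, key p ⟨hp1, hp2, hp3, hp4, hp5, hp6, hp7⟩ (fun k => min_le_left _ _),
      key q ⟨hq1, hq2, hq3, hq4, hq5, hq6, hq7⟩ (fun k => min_le_right _ _)⟩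
  · -- cover
    intro p hp
    have hαβ : p.α < β := hβ p hp
    have hfin1 : {k | η β k ≤ η p.α k}.Finite := hinc p.α β hαβ hβδ
    have hfin2 : {k | p.g k ≤ (η β k : ℕ∞)}.Finite := p.hg β hβδ
    obtain ⟨N, hN⟩ := (hfin1.union hfin2).bddAbove
    set n : ℕ := max p.ρ.length (N + 1) with hn
    have htail : ∀ k, n ≤ k → η p.α k ≤ η β k ∧ (η β k : ℕ∞) ≤ p.g k := by
      intro k hk
      have hk1 : ¬ k ≤ N := by
        intro h
        have := lt_of_lt_of_le (Nat.lt_succ_of_le h) (le_max_right p.ρ.length (N + 1))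
        omega
      constructor
      · by_contra hc
        exact hk1 (hN (Or.inl (le_of_not_ge hc)))
      · by_contra hc
        exact hk1 (hN (Or.inr (le_of_not_ge hc)))
    set u : List ℕ := List.ofFn (fun i : Fin n => η p.α i) with hu
    set v : List ℕ∞ := List.ofFn (fun i : Fin n => p.g i) with hv
    have hpmem : p ∈ E (p.ρ, n, u, v) := by
      refine ⟨List.prefix_refl _, le_max_left _ _, ?_, le_of_lt hαβ, ?_, ?_, htail⟩
      · intro k hk1 hk2; exact absurd hk2 (not_lt.mpr hk1)
      · intro k hk1 hk2
        rw [hu, getD_ofFn _ _ hk2]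
      · intro k hk
        rw [hv, getD_ofFn _ _ hk]
    obtain ⟨m, hm⟩ := hf (p.ρ, n, u, v)
    exact Set.mem_iUnion.mpr ⟨m, by rw [hm]; exact hpmem⟩
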